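/- Convergence domain of the multiple polylogarithm: let C be a composition array with sets U_1,…,U_r of cardinalities n_1,…,n_r and positive integers s_1,…,s_r, and let f_1,…,f_r ∈ T_Σ satisfy ‖f_i‖ < q^{(s_i·q − n_i)/(q−1)} for each i. Then the series Li_C(f_1,…,f_r) = Σ_{i_1 > i_2 > ⋯ > i_r ≥ 0} b_{i_1}(U_1)⋯b_{i_r}(U_r)·τ^{i_1}(f_1)⋯τ^{i_r}(f_r) / (ℓ_{i_1}^{s_1}⋯ℓ_{i_r}^{s_r}) converges in T_Σ, i.e., the general term tends to 0 in Gauss norm. -/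

import Mathlib

open Filter

/-- Convergence domain of the multiple polylogarithm: if `‖f_l‖ < q^{(s_l q − n_l)/(q−1)}`
for each `l`, then the general term of
`Li_C(f_1,…,f_r) = Σ_{i_1 > ⋯ > i_r ≥ 0} b_{i_1}(U_1)⋯b_{i_r}(U_r)·τ^{i_1}(f_1)⋯τ^{i_r}(f_r)
/ (ℓ_{i_1}^{s_1}⋯ℓ_{i_r}^{s_r})` tends to `0` in Gauss norm (along the cofinite filter on
strictly decreasing index tuples), where `‖ℓ_i‖ = q^{q(q^i−1)/(q−1)}`,
`‖b_l(i)‖ = q^{n_l(q^i−1)/(q−1)}` and `‖τ^i f‖ = ‖f‖^{q^i}`. -/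
theorem multiple_polylog_term_tendsto_zero {T : Type*} [NormedCommRing T]
    (hna : IsNonarchimedean (‖·‖ : T → ℝ))
    (hmul : ∀ x y : T, ‖x * y‖ = ‖x‖ * ‖y‖)
    (q : ℕ) (hq : 1 < q)
    (τ : T →+* T) (hτ : ∀ x : T, ‖τ x‖ = ‖x‖ ^ q)
    (r : ℕ) (s nn : Fin r → ℕ) (hs : ∀ l, 1 ≤ s l)
    (ℓ ℓinv : ℕ → T) (hℓinv : ∀ i, ℓinv i * ℓ i = 1)
    (hℓ : ∀ i, ‖ℓ i‖ = (q : ℝ) ^ ((q : ℝ) * ((q : ℝ) ^ i - 1) / ((q : ℝ) - 1)))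
    (b : Fin r → ℕ → T)
    (hb : ∀ l i, ‖b l i‖ = (q : ℝ) ^ ((nn l : ℝ) * ((q : ℝ) ^ i - 1) / ((q : ℝ) - 1)))
    (f : Fin r → T)
    (hf : ∀ l, ‖f l‖ < (q : ℝ) ^ (((s l : ℝ) * (q : ℝ) - (nn l : ℝ)) / ((q : ℝ) - 1))) :
    Tendsto
      (fun g : {g : Fin r → ℕ // StrictAnti g} =>
        ‖∏ l : Fin r, b l (g.1 l) * (⇑τ)^[g.1 l] (f l) * ℓinv (g.1 l) ^ s l‖)
      cofinite (nhds 0) := by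
  classical
  by_cases h1 : ‖(1 : T)‖ = 0
  · have hz : ∀ x : T, ‖x‖ = 0 := fun x => by
      have h := hmul x 1
      rwa [mul_one, h1, mul_zero] at h
    simp only [hz]
    exact tendsto_const_nhds
  have h1' : ‖(1 : T)‖ = 1 := by
    have h := hmul 1 1
    rw [mul_one] at h
    nth_rewrite 1 [← mul_one ‖(1 : T)‖] at h
    exact (mul_left_cancel₀ h1 h).symm
  rcases r with _ | m
  · haveI : Subsingleton {g : Fin 0 → ℕ // StrictAnti g} := by
      constructor
      intro a bb
      ext l
      exact l.elim0
    rw [Filter.cofinite_eq_bot]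
    exact tendsto_bot
  -- basic positivity facts
  have hq0 : (0 : ℝ) < q := by positivity
  have hq1 : (1 : ℝ) < q := by exact_mod_cast hq
  have hD : (0 : ℝ) < (q : ℝ) - 1 := by linarith
  set A : Fin (m + 1) → ℝ := fun l => ((s l : ℝ) * q - nn l) / ((q : ℝ) - 1) with hA
  set K : Fin (m + 1) → ℝ := fun l => (q : ℝ) ^ (A l) with hKdef
  have hK : ∀ l, 0 < K l := fun l => Real.rpow_pos_of_pos hq0 _
  set c : Fin (m + 1) → ℝ := fun l => ‖f l‖ / K l with hcdef
  have hc1 : ∀ l, c l < 1 := fun l => (div_lt_one (hK l)).mpr (hf l)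
  have hc0 : ∀ l, 0 ≤ c l := fun l => div_nonneg (norm_nonneg _) (hK l).le
  -- norm of powers and products
  have hnormpow : ∀ (x : T) (n : ℕ), ‖x ^ n‖ = ‖x‖ ^ n := by
    intro x n
    induction n with
    | zero => simp [h1']
    | succ k ih => rw [pow_succ, hmul, ih, pow_succ]
  have hτiter : ∀ (x : T) (i : ℕ), ‖(⇑τ)^[i] x‖ = ‖x‖ ^ (q ^ i) := by
    intro x i
    induction i with
    | zero => simp
    | succ k ih =>
      rw [Function.iterate_succ_apply', hτ, ih, ← pow_mul, pow_succ]
  have hℓn : ∀ i, ‖ℓinv i‖ = (‖ℓ i‖)⁻¹ := by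
    intro i
    have hpos : (0 : ℝ) < ‖ℓ i‖ := by
      rw [hℓ]; exact Real.rpow_pos_of_pos hq0 _
    have h := hmul (ℓinv i) (ℓ i)
    rw [hℓinv i, h1'] at h
    field_simp
    linarith [h.symm]
  -- factor computation
  have hfl : ∀ l, ‖f l‖ = c l * K l := fun l => (div_mul_cancel₀ _ (hK l).ne').symm
  have hfactor : ∀ (l : Fin (m + 1)) (i : ℕ),
      ‖b l i * (⇑τ)^[i] (f l) * ℓinv i ^ s l‖ = c l ^ (q ^ i) * K l := by
    intro l i
    rw [hmul, hmul, hnormpow, hτiter, hb, hℓn, hℓ, hfl l, mul_pow]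
    rw [show ((q : ℝ) ^ ((q : ℝ) * ((q : ℝ) ^ i - 1) / ((q : ℝ) - 1)))⁻¹
        = (q : ℝ) ^ (-((q : ℝ) * ((q : ℝ) ^ i - 1) / ((q : ℝ) - 1))) from
      (Real.rpow_neg hq0.le _).symm]
    rw [← Real.rpow_natCast ((q : ℝ) ^ (-((q : ℝ) * ((q : ℝ) ^ i - 1) / ((q : ℝ) - 1)))) (s l),
      ← Real.rpow_mul hq0.le,
      ← Real.rpow_natCast (K l) (q ^ i)]
    rw [hKdef]
    rw [← Real.rpow_mul hq0.le]
    rw [show (((q : ℕ) ^ i : ℕ) : ℝ) = (q : ℝ) ^ i by push_cast; ring]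
    rw [mul_comm ((q:ℝ) ^ ((nn l : ℝ) * ((q : ℝ) ^ i - 1) / ((q : ℝ) - 1)))
        (c l ^ q ^ i * (q:ℝ) ^ (A l * (q : ℝ) ^ i)), mul_assoc, mul_assoc,
      ← Real.rpow_add hq0, ← Real.rpow_add hq0]
    congr 1
    rw [hA]
    field_simp
    ring_nf
  -- total norm
  have hprodnorm : ∀ (x : Fin (m + 1) → T), ‖∏ l, x l‖ = ∏ l, ‖x l‖ := by
    intro x
    induction (Finset.univ : Finset (Fin (m + 1))) using Finset.cons_induction with
    | empty => simp [h1']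
    | cons a t ha ih => rw [Finset.prod_cons, hmul, ih, Finset.prod_cons]
  have htotal : ∀ g : {g : Fin (m + 1) → ℕ // StrictAnti g},
      ‖∏ l, b l (g.1 l) * (⇑τ)^[g.1 l] (f l) * ℓinv (g.1 l) ^ s l‖
        = (∏ l, c l ^ (q ^ (g.1 l))) * ∏ l, K l := by
    intro g
    rw [hprodnorm]
    rw [Finset.prod_congr rfl fun l _ => hfactor l (g.1 l), Finset.prod_mul_distrib]
  -- g.1 0 tends to infinity along cofinite
  have hg0 : Tendsto (fun g : {g : Fin (m + 1) → ℕ // StrictAnti g} => g.1 0)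
      cofinite atTop := by
    rw [tendsto_atTop]
    intro N
    rw [eventually_cofinite]
    have hfin : (Set.univ.pi fun _ : Fin (m + 1) => Set.Iio N).Finite :=
      Set.Finite.pi fun _ => Set.finite_Iio N
    have hpre : (Subtype.val ⁻¹' (Set.univ.pi fun _ : Fin (m + 1) => Set.Iio N) :
        Set {g : Fin (m + 1) → ℕ // StrictAnti g}).Finite :=
      hfin.preimage (Subtype.coe_injective.injOn)
    refine hpre.subset ?_
    intro g hg
    simp only [Set.mem_setOf_eq, not_le] at hg
    intro l _
    exact lt_of_le_of_lt (g.2.antitone (Fin.zero_le l)) hg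
  -- bound
  have hbound : ∀ g : {g : Fin (m + 1) → ℕ // StrictAnti g},
      ‖∏ l, b l (g.1 l) * (⇑τ)^[g.1 l] (f l) * ℓinv (g.1 l) ^ s l‖
        ≤ (∏ l, K l) * c 0 ^ (g.1 0) := by
    intro g
    rw [htotal g]
    have h2 : (∏ l, c l ^ (q ^ (g.1 l))) ≤ c 0 ^ (g.1 0) := by
      have e1 : (∏ l, c l ^ (q ^ (g.1 l)))
          = c 0 ^ (q ^ (g.1 0)) * ∏ l ∈ Finset.univ.erase 0, c l ^ (q ^ (g.1 l)) :=
        (Finset.mul_prod_erase _ _ (Finset.mem_univ 0)).symm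
      have e2 : (∏ l ∈ Finset.univ.erase 0, c l ^ (q ^ (g.1 l))) ≤ 1 :=
        Finset.prod_le_one (fun l _ => pow_nonneg (hc0 l) _)
          (fun l _ => pow_le_one₀ (hc0 l) (hc1 l).le)
      have e3 : c 0 ^ (q ^ (g.1 0)) ≤ c 0 ^ (g.1 0) :=
        pow_le_pow_of_le_one (hc0 0) (hc1 0).le (Nat.le_of_lt (Nat.lt_pow_self hq))
      calc (∏ l, c l ^ (q ^ (g.1 l)))
          = c 0 ^ (q ^ (g.1 0)) * ∏ l ∈ Finset.univ.erase 0, c l ^ (q ^ (g.1 l)) := e1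
        _ ≤ c 0 ^ (q ^ (g.1 0)) * 1 :=
            mul_le_mul_of_nonneg_left e2 (pow_nonneg (hc0 0) _)
        _ = c 0 ^ (q ^ (g.1 0)) := mul_one _
        _ ≤ c 0 ^ (g.1 0) := e3
    calc (∏ l, c l ^ (q ^ (g.1 l))) * ∏ l, K l
        ≤ c 0 ^ (g.1 0) * ∏ l, K l :=
          mul_le_mul_of_nonneg_right h2
            (Finset.prod_nonneg fun l _ => (hK l).le)
      _ = (∏ l, K l) * c 0 ^ (g.1 0) := mul_comm _ _
  have hlim : Tendsto (fun g : {g : Fin (m + 1) → ℕ // StrictAnti g} =>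
      (∏ l, K l) * c 0 ^ (g.1 0)) cofinite (nhds 0) := by
    have h := ((tendsto_pow_atTop_nhds_zero_of_lt_one (hc0 0) (hc1 0)).comp hg0).const_mul
      (∏ l, K l)
    simpa using h
  exact squeeze_zero (fun g => norm_nonneg _) hbound hlim
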